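/- arXiv:1512.00775 — 2 statements merged into one kernel-verified Lean document; each statement's English description precedes it below -/
import Mathlib

section
/- Let B and D be orthogonal projections on ℂ^N. For any unit vector f, if α = ‖Df‖ and β = ‖Bf‖ then arccos(α) + arccos(β) ≥ arccos(σ_max(BD)), where σ_max(BD) denotes the largest singular value of BD. -/
open Matrix

/-- The operator (spectral) norm of a complex matrix, i.e. its largest singular value. -/
noncomputable def opNorm {N : ℕ} (M : Matrix (Fin N) (Fin N) ℂ) : ℝ :=
  ‖Matrix.toEuclideanCLM (𝕜 := ℂ) M‖

/-- The Euclidean (ℓ²) norm of a vector in ℂ^N. -/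
noncomputable def euclVecNorm {N : ℕ} (x : Fin N → ℂ) : ℝ :=
  ‖(EuclideanSpace.equiv (Fin N) ℂ).symm x‖

local notation "⟪" x ", " y "⟫" => @inner ℂ _ _ x y

theorem aux_proj_angle {E : Type*} [NormedAddCommGroup E] [InnerProductSpace ℂ E]
    [CompleteSpace E] (S T : E →L[ℂ] E)
    (hSa : ContinuousLinearMap.adjoint S = S) (hSi : S * S = S)
    (hTa : ContinuousLinearMap.adjoint T = T) (hTi : T * T = T)
    (e : E) (he : ‖e‖ = 1) :
    Real.arccos ‖S e‖ + Real.arccos ‖T e‖ ≥ Real.arccos ‖T * S‖ := by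
  set α := ‖S e‖ with hα'
  set β := ‖T e‖ with hβ'
  set σ := ‖T * S‖ with hσ'
  have hSadj : ∀ x y : E, ⟪S x, y⟫ = ⟪x, S y⟫ := by
    intro x y
    calc ⟪S x, y⟫ = ⟪(ContinuousLinearMap.adjoint S) x, y⟫ := by rw [hSa]
      _ = ⟪x, S y⟫ := ContinuousLinearMap.adjoint_inner_left S y x
  have hTadj : ∀ x y : E, ⟪T x, y⟫ = ⟪x, T y⟫ := by
    intro x y
    calc ⟪T x, y⟫ = ⟪(ContinuousLinearMap.adjoint T) x, y⟫ := by rw [hTa]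
      _ = ⟪x, T y⟫ := ContinuousLinearMap.adjoint_inner_left T y x
  have hSS : ∀ x, S (S x) = S x := by
    intro x
    calc S (S x) = (S * S) x := rfl
      _ = S x := by rw [hSi]
  have hTT : ∀ x, T (T x) = T x := by
    intro x
    calc T (T x) = (T * T) x := rfl
      _ = T x := by rw [hTi]
  have ha0 : 0 ≤ α := norm_nonneg _
  have hb0 : 0 ≤ β := norm_nonneg _
  have hee : ⟪e, e⟫ = 1 := by
    rw [inner_self_eq_norm_sq_to_K, he]; norm_num
  have hae : ⟪e, S e⟫ = (α : ℂ) ^ 2 := by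
    calc ⟪e, S e⟫ = ⟪e, S (S e)⟫ := by rw [hSS]
      _ = ⟪S e, S e⟫ := (hSadj e (S e)).symm
      _ = (α : ℂ) ^ 2 := by rw [inner_self_eq_norm_sq_to_K, hα']; norm_cast
  have hbe : ⟪e, T e⟫ = (β : ℂ) ^ 2 := by
    calc ⟪e, T e⟫ = ⟪e, T (T e)⟫ := by rw [hTT]
      _ = ⟪T e, T e⟫ := (hTadj e (T e)).symm
      _ = (β : ℂ) ^ 2 := by rw [inner_self_eq_norm_sq_to_K, hβ']; norm_cast
  have ha1 : α ≤ 1 := by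
    have h1 : RCLike.re ⟪e, S e⟫ ≤ ‖e‖ * ‖S e‖ := re_inner_le_norm e (S e)
    rw [hae, he, ← hα'] at h1
    have h2 : RCLike.re ((α : ℂ) ^ 2) = α ^ 2 := by norm_cast
    rw [h2] at h1
    nlinarith
  have hb1 : β ≤ 1 := by
    have h1 : RCLike.re ⟪e, T e⟫ ≤ ‖e‖ * ‖T e‖ := re_inner_le_norm e (T e)
    rw [hbe, he, ← hβ'] at h1
    have h2 : RCLike.re ((β : ℂ) ^ 2) = β ^ 2 := by norm_cast
    rw [h2] at h1
    nlinarith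
  set g : E := S e - ((α : ℂ) ^ 2) • e with hg'
  set h : E := T e - ((β : ℂ) ^ 2) • e with hh'
  have hge : ⟪e, g⟫ = 0 := by
    rw [hg', inner_sub_right, inner_smul_right, hae, hee]; ring
  have hhe : ⟪e, h⟫ = 0 := by
    rw [hh', inner_sub_right, inner_smul_right, hbe, hee]; ring
  have heg : ⟪g, e⟫ = 0 := by rw [← inner_conj_symm, hge]; simp
  have heh : ⟪h, e⟫ = 0 := by rw [← inner_conj_symm, hhe]; simp
  have hgn : ‖g‖ ^ 2 = α ^ 2 - α ^ 4 := by
    have h2 : ⟪S e, e⟫ = (α : ℂ) ^ 2 := by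
      rw [← inner_conj_symm, hae]
      simp [map_pow, Complex.conj_ofReal]
    have h3 : ⟪S e, S e⟫ = (α : ℂ) ^ 2 := by
      rw [inner_self_eq_norm_sq_to_K, hα']; norm_cast
    have h1 : ⟪g, g⟫ = (α : ℂ) ^ 2 - (α : ℂ) ^ 4 := by
      rw [hg', inner_sub_left, inner_sub_right, inner_sub_right, inner_smul_left,
        inner_smul_left, inner_smul_right, inner_smul_right, hae, hee, h2, h3]
      simp only [map_pow, Complex.conj_ofReal]
      ring
    have h4 : ((‖g‖ ^ 2 : ℝ) : ℂ) = ((α ^ 2 - α ^ 4 : ℝ) : ℂ) := by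
      push_cast
      rw [← h1, inner_self_eq_norm_sq_to_K]
      norm_cast
    exact_mod_cast h4
  have hhn : ‖h‖ ^ 2 = β ^ 2 - β ^ 4 := by
    have h2 : ⟪T e, e⟫ = (β : ℂ) ^ 2 := by
      rw [← inner_conj_symm, hbe]
      simp [map_pow, Complex.conj_ofReal]
    have h3 : ⟪T e, T e⟫ = (β : ℂ) ^ 2 := by
      rw [inner_self_eq_norm_sq_to_K, hβ']; norm_cast
    have h1 : ⟪h, h⟫ = (β : ℂ) ^ 2 - (β : ℂ) ^ 4 := by
      rw [hh', inner_sub_left, inner_sub_right, inner_sub_right, inner_smul_left,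
        inner_smul_left, inner_smul_right, inner_smul_right, hbe, hee, h2, h3]
      simp only [map_pow, Complex.conj_ofReal]
      ring
    have h4 : ((‖h‖ ^ 2 : ℝ) : ℂ) = ((β ^ 2 - β ^ 4 : ℝ) : ℂ) := by
      push_cast
      rw [← h1, inner_self_eq_norm_sq_to_K]
      norm_cast
    exact_mod_cast h4
  have hgnorm : ‖g‖ = α * Real.sqrt (1 - α ^ 2) := by
    rw [← Real.sqrt_sq (norm_nonneg g), hgn,
      show α ^ 2 - α ^ 4 = α ^ 2 * (1 - α ^ 2) by ring,
      Real.sqrt_mul (by positivity), Real.sqrt_sq ha0]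
  have hhnorm : ‖h‖ = β * Real.sqrt (1 - β ^ 2) := by
    rw [← Real.sqrt_sq (norm_nonneg h), hhn,
      show β ^ 2 - β ^ 4 = β ^ 2 * (1 - β ^ 2) by ring,
      Real.sqrt_mul (by positivity), Real.sqrt_sq hb0]
  have hdec : ⟪T e, S e⟫ = (α : ℂ) ^ 2 * (β : ℂ) ^ 2 + ⟪h, g⟫ := by
    have h1 : T e = (β : ℂ) ^ 2 • e + h := by rw [hh']; abel
    have h2 : S e = (α : ℂ) ^ 2 • e + g := by rw [hg']; abel
    rw [h1, h2, inner_add_left, inner_add_right, inner_add_right, inner_smul_left,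
      inner_smul_left, inner_smul_right, inner_smul_right, hee, hge, heh]
    simp only [map_pow, Complex.conj_ofReal]
    ring
  have hlow : α ^ 2 * β ^ 2 - (α * Real.sqrt (1 - α ^ 2)) * (β * Real.sqrt (1 - β ^ 2)) ≤
      RCLike.re ⟪T e, S e⟫ := by
    have h2 : |RCLike.re ⟪h, g⟫| ≤ ‖h‖ * ‖g‖ :=
      (RCLike.abs_re_le_norm _).trans (norm_inner_le_norm h g)
    have h1 : -(‖h‖ * ‖g‖) ≤ RCLike.re ⟪h, g⟫ := by linarith [(abs_le.mp h2).1]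
    have h3 : RCLike.re ((α : ℂ) ^ 2 * (β : ℂ) ^ 2) = α ^ 2 * β ^ 2 := by norm_cast
    rw [hdec, map_add, h3, ← hgnorm, ← hhnorm]
    linarith
  have hσ0 : 0 ≤ σ := norm_nonneg _
  have hup : RCLike.re ⟪T e, S e⟫ ≤ β * (σ * α) := by
    have h1 : ⟪T e, S e⟫ = ⟪T e, (T * S) (S e)⟫ := by
      have h4 : (T * S) (S e) = T (S (S e)) := rfl
      rw [h4, ← hTadj, hTT, hSS]
    have h2 : RCLike.re ⟪T e, (T * S) (S e)⟫ ≤ ‖T e‖ * ‖(T * S) (S e)‖ := re_inner_le_norm _ _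
    have h3 : ‖(T * S) (S e)‖ ≤ σ * ‖S e‖ := (T * S).le_opNorm (S e)
    rw [h1]
    calc RCLike.re ⟪T e, (T * S) (S e)⟫ ≤ ‖T e‖ * ‖(T * S) (S e)‖ := h2
      _ ≤ ‖T e‖ * (σ * ‖S e‖) := mul_le_mul_of_nonneg_left h3 (norm_nonneg _)
      _ = β * (σ * α) := by rw [← hα', ← hβ']
  have hcosle : α * β - Real.sqrt (1 - α ^ 2) * Real.sqrt (1 - β ^ 2) ≤ σ := by
    rcases eq_or_lt_of_le ha0 with ha | ha
    · have h1 : α * β = 0 := by rw [← ha]; ring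
      have hsq : 0 ≤ Real.sqrt (1 - α ^ 2) * Real.sqrt (1 - β ^ 2) := by positivity
      linarith
    rcases eq_or_lt_of_le hb0 with hb | hb
    · have h1 : α * β = 0 := by rw [← hb]; ring
      have hsq : 0 ≤ Real.sqrt (1 - α ^ 2) * Real.sqrt (1 - β ^ 2) := by positivity
      linarith
    have hab : 0 < α * β := mul_pos ha hb
    have key : α * β * (α * β - Real.sqrt (1 - α ^ 2) * Real.sqrt (1 - β ^ 2)) ≤ α * β * σ := by
      nlinarith [hlow.trans hup]
    exact le_of_mul_le_mul_left key hab
  have hcos : Real.cos (Real.arccos α + Real.arccos β) =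
      α * β - Real.sqrt (1 - α ^ 2) * Real.sqrt (1 - β ^ 2) := by
    rw [Real.cos_add, Real.cos_arccos (by linarith) ha1, Real.cos_arccos (by linarith) hb1,
      Real.sin_arccos, Real.sin_arccos]
  have hs0 : 0 ≤ Real.arccos α + Real.arccos β := by
    have := Real.arccos_nonneg α
    have := Real.arccos_nonneg β
    linarith
  have hsπ : Real.arccos α + Real.arccos β ≤ Real.pi := by
    have h1 := Real.arccos_le_pi_div_two.mpr ha0
    have h2 := Real.arccos_le_pi_div_two.mpr hb0
    linarith
  have harccos_anti : ∀ x y : ℝ, x ≤ y → Real.arccos y ≤ Real.arccos x := by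
    intro x y hxy
    simp only [Real.arccos]
    have := Real.monotone_arcsin hxy
    linarith
  have hfin : Real.arccos σ ≤ Real.arccos (Real.cos (Real.arccos α + Real.arccos β)) :=
    harccos_anti _ _ (by rw [hcos]; exact hcosle)
  rw [Real.arccos_cos hs0 hsπ] at hfin
  exact hfin

theorem stmt6 (N : ℕ) (hN : 0 < N) (B D : Matrix (Fin N) (Fin N) ℂ)
    (hB : Bᴴ = B ∧ B * B = B) (hD : Dᴴ = D ∧ D * D = D)
    (f : Fin N → ℂ) (hf : euclVecNorm f = 1) (α β : ℝ)
    (hα : α = euclVecNorm (D.mulVec f)) (hβ : β = euclVecNorm (B.mulVec f)) :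
    Real.arccos α + Real.arccos β ≥ Real.arccos (opNorm (B * D)) := by
  obtain ⟨hB1, hB2⟩ := hB
  obtain ⟨hD1, hD2⟩ := hD
  set S := Matrix.toEuclideanCLM (𝕜 := ℂ) D with hS
  set T := Matrix.toEuclideanCLM (𝕜 := ℂ) B with hT
  set e : EuclideanSpace ℂ (Fin N) := (EuclideanSpace.equiv (Fin N) ℂ).symm f with he'
  have he : ‖e‖ = 1 := hf
  have hDe : S e = (EuclideanSpace.equiv (Fin N) ℂ).symm (D.mulVec f) := by
    simp [hS, he', Matrix.toLin'_apply]
  have hBe : T e = (EuclideanSpace.equiv (Fin N) ℂ).symm (B.mulVec f) := by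
    simp [hT, he', Matrix.toLin'_apply]
  have hα' : α = ‖S e‖ := by rw [hα, hDe]; rfl
  have hβ' : β = ‖T e‖ := by rw [hβ, hBe]; rfl
  have hSa : ContinuousLinearMap.adjoint S = S := by
    rw [← ContinuousLinearMap.star_eq_adjoint, hS, ← map_star, Matrix.star_eq_conjTranspose, hD1]
  have hTa : ContinuousLinearMap.adjoint T = T := by
    rw [← ContinuousLinearMap.star_eq_adjoint, hT, ← map_star, Matrix.star_eq_conjTranspose, hB1]
  have hSi : S * S = S := by rw [hS, ← _root_.map_mul, hD2]
  have hTi : T * T = T := by rw [hT, ← _root_.map_mul, hB2]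
  have hM : opNorm (B * D) = ‖T * S‖ := by
    rw [opNorm, _root_.map_mul, ← hS, ← hT]
  rw [hα', hβ', hM]
  exact aux_proj_angle S T hSa hSi hTa hTi e he
end

section
/- Let B and D be orthogonal projections on ℂ^N, with B = U Σ_F U^H for a unitary U and 0/1 diagonal Σ_F, and D = Diag(1_S). Then ‖B D̄‖₂ < 1 (where D̄ = I − D) if and only if the |S| × |F| submatrix G of U obtained by keeping the rows indexed by S and the columns indexed by F has full column rank |F|. -/
open Matrix

lemma myProj {E : Type*} [NormedAddCommGroup E] [InnerProductSpace ℂ E] [CompleteSpace E]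
    (T : E →L[ℂ] E) (hadj : ContinuousLinearMap.adjoint T = T) (hidem : T * T = T) (x : E) :
    ‖T x‖ ≤ ‖x‖ ∧ (‖T x‖ = ‖x‖ → T x = x) := by
  have hz : T (x - T x) = 0 := by
    have h := congrArg (fun M : E →L[ℂ] E => M x) hidem
    simp only [ContinuousLinearMap.mul_apply] at h
    simp [map_sub, h]
  have horth : (inner ℂ (T x) (x - T x) : ℂ) = 0 := by
    rw [← ContinuousLinearMap.adjoint_inner_right, hadj, hz, inner_zero_right]
  have hpyth : ‖x‖ ^ 2 = ‖T x‖ ^ 2 + ‖x - T x‖ ^ 2 := by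
    have h := norm_add_sq (𝕜 := ℂ) (T x) (x - T x)
    rw [horth] at h
    simpa using h
  constructor
  · nlinarith [norm_nonneg (x - T x), norm_nonneg x, norm_nonneg (T x)]
  · intro h
    rw [h] at hpyth
    have h3 : ‖x - T x‖ = 0 := by nlinarith [norm_nonneg (x - T x)]
    rw [norm_eq_zero, sub_eq_zero] at h3
    exact h3.symm

lemma myAttain {E : Type*} [NormedAddCommGroup E] [NormedSpace ℂ E]
    [FiniteDimensional ℂ E] [Nontrivial E] (T : E →L[ℂ] E) :
    ∃ x : E, ‖x‖ = 1 ∧ ‖T x‖ = ‖T‖ := by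
  obtain ⟨x, hx, hmax⟩ := (isCompact_sphere (0 : E) 1).exists_isMaxOn
    ((NormedSpace.sphere_nonempty (x := (0:E))).mpr zero_le_one)
    (continuous_norm.comp T.continuous).continuousOn
  rw [mem_sphere_zero_iff_norm] at hx
  refine ⟨x, hx, le_antisymm ?_ ?_⟩
  · simpa [hx] using T.le_opNorm x
  · refine T.opNorm_le_bound (by positivity) fun y => ?_
    rcases eq_or_ne y 0 with rfl | hy
    · simp
    · have hyn : ‖y‖ ≠ 0 := norm_ne_zero_iff.mpr hy
      have hz : (‖y‖⁻¹ • y) ∈ Metric.sphere (0 : E) 1 := by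
        simp [norm_smul, inv_mul_cancel₀ hyn]
      have h0 := hmax hz
      have h1 : ‖y‖⁻¹ * ‖T y‖ ≤ ‖T x‖ := by
        simpa [Function.comp, _root_.map_smul, norm_smul] using h0
      calc ‖T y‖ = ‖y‖ * (‖y‖⁻¹ * ‖T y‖) := by field_simp
        _ ≤ ‖y‖ * ‖T x‖ := mul_le_mul_of_nonneg_left h1 (norm_nonneg y)
        _ = ‖T x‖ * ‖y‖ := mul_comm _ _

set_option maxHeartbeats 1000000 in
theorem stmt13 (N : ℕ) (hN : 0 < N) (U : Matrix (Fin N) (Fin N) ℂ)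
    (hU : U * Uᴴ = 1 ∧ Uᴴ * U = 1) (F S : Finset (Fin N))
    (B D : Matrix (Fin N) (Fin N) ℂ)
    (hB : B = U * Matrix.diagonal (fun i => if i ∈ F then (1 : ℂ) else 0) * Uᴴ)
    (hD : D = Matrix.diagonal (fun i => if i ∈ S then (1 : ℂ) else 0))
    (G : Matrix {i // i ∈ S} {j // j ∈ F} ℂ)
    (hG : G = U.submatrix (fun i : {i // i ∈ S} => (i : Fin N))
                          (fun j : {j // j ∈ F} => (j : Fin N))) :
    opNorm (B * (1 - D)) < 1 ↔ G.rank = F.card := by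
  classical
  obtain ⟨hU1, hU2⟩ := hU
  set f : Fin N → ℂ := fun i => if i ∈ F then 1 else 0 with hf
  -- matrix algebra facts
  have hff : (fun i => f i * f i) = f := by
    funext i; by_cases h : i ∈ F <;> simp [hf, h]
  have hfstar : star f = f := by
    funext i; by_cases h : i ∈ F <;> simp [hf, h]
  have hBB : B * B = B := by
    rw [hB]
    have key : Uᴴ * (U * (Matrix.diagonal f * Uᴴ)) = Matrix.diagonal f * Uᴴ := by
      rw [← Matrix.mul_assoc, hU2, Matrix.one_mul]
    calc (U * Matrix.diagonal f * Uᴴ) * (U * Matrix.diagonal f * Uᴴ)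
        = U * (Matrix.diagonal f * (Uᴴ * (U * (Matrix.diagonal f * Uᴴ)))) := by
          simp only [Matrix.mul_assoc]
      _ = U * (Matrix.diagonal f * (Matrix.diagonal f * Uᴴ)) := by rw [key]
      _ = U * ((Matrix.diagonal f * Matrix.diagonal f) * Uᴴ) := by
          rw [Matrix.mul_assoc]
      _ = U * Matrix.diagonal f * Uᴴ := by
          rw [Matrix.diagonal_mul_diagonal, hff, Matrix.mul_assoc]
  have hBH : Bᴴ = B := by
    rw [hB]
    simp only [Matrix.conjTranspose_mul, Matrix.conjTranspose_conjTranspose,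
      Matrix.diagonal_conjTranspose, hfstar, Matrix.mul_assoc]
  have hdstar : (star fun i => if i ∈ S then (1:ℂ) else 0)
      = fun i => if i ∈ S then (1:ℂ) else 0 := by
    funext i; by_cases h : i ∈ S <;> simp [h]
  have hdmul : (fun i => (if i ∈ S then (1:ℂ) else 0) * (if i ∈ S then (1:ℂ) else 0))
      = fun i => if i ∈ S then (1:ℂ) else 0 := by
    funext i; by_cases h : i ∈ S <;> simp [h]
  have hdS : D * D = D := by
    rw [hD, Matrix.diagonal_mul_diagonal, hdmul]
  have hDH : Dᴴ = D := by
    rw [hD, Matrix.diagonal_conjTranspose, hdstar]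
  have hQQ : (1 - D) * (1 - D) = 1 - D := by
    have h : (1 - D) * (1 - D) = 1 - D - D + D * D := by noncomm_ring
    rw [h, hdS]; abel
  have hQH : (1 - D)ᴴ = 1 - D := by
    rw [Matrix.conjTranspose_sub, Matrix.conjTranspose_one, hDH]
  -- CLM facts
  have hTBadj : ContinuousLinearMap.adjoint (Matrix.toEuclideanCLM (𝕜 := ℂ) B)
      = Matrix.toEuclideanCLM (𝕜 := ℂ) B := by
    rw [← ContinuousLinearMap.star_eq_adjoint, ← map_star, Matrix.star_eq_conjTranspose, hBH]
  have hTBidem : Matrix.toEuclideanCLM (𝕜 := ℂ) B * Matrix.toEuclideanCLM (𝕜 := ℂ) B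
      = Matrix.toEuclideanCLM (𝕜 := ℂ) B := by rw [← _root_.map_mul, hBB]
  have hTQadj : ContinuousLinearMap.adjoint (Matrix.toEuclideanCLM (𝕜 := ℂ) (1 - D))
      = Matrix.toEuclideanCLM (𝕜 := ℂ) (1 - D) := by
    rw [← ContinuousLinearMap.star_eq_adjoint, ← map_star, Matrix.star_eq_conjTranspose, hQH]
  have hTQidem : Matrix.toEuclideanCLM (𝕜 := ℂ) (1 - D) * Matrix.toEuclideanCLM (𝕜 := ℂ) (1 - D)
      = Matrix.toEuclideanCLM (𝕜 := ℂ) (1 - D) := by rw [← _root_.map_mul, hQQ]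
  have hbr : ∀ (M : Matrix (Fin N) (Fin N) ℂ) (v : Fin N → ℂ),
      Matrix.toEuclideanCLM (𝕜 := ℂ) M ((WithLp.equiv 2 (Fin N → ℂ)).symm v)
        = (WithLp.equiv 2 (Fin N → ℂ)).symm (M *ᵥ v) := by
    intro M v
    exact Matrix.toEuclideanCLM_toLp M v
  have hzero : (WithLp.equiv 2 (Fin N → ℂ)).symm (0 : Fin N → ℂ) = 0 := rfl
  have hopdef : opNorm (B * (1 - D)) = ‖Matrix.toEuclideanCLM (n := Fin N) (𝕜 := ℂ) (B * (1 - D))‖ := rfl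
  -- Claim I
  have claimI : opNorm (B * (1 - D)) < 1 ↔
      ¬ ∃ x : Fin N → ℂ, x ≠ 0 ∧ B *ᵥ x = x ∧ D *ᵥ x = 0 := by
    constructor
    · rintro hlt ⟨x, hx0, hBx, hDx⟩
      have hQx : (1 - D) *ᵥ x = x := by
        rw [Matrix.sub_mulVec, Matrix.one_mulVec, hDx, sub_zero]
      have hTx : Matrix.toEuclideanCLM (𝕜 := ℂ) (B * (1 - D))
          ((WithLp.equiv 2 (Fin N → ℂ)).symm x) = (WithLp.equiv 2 (Fin N → ℂ)).symm x := by
        rw [hbr, ← Matrix.mulVec_mulVec, hQx, hBx]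
      have hxn : (0:ℝ) < ‖(WithLp.equiv 2 (Fin N → ℂ)).symm x‖ := by
        rw [norm_pos_iff]
        intro h
        exact hx0 ((WithLp.equiv 2 (Fin N → ℂ)).symm.injective (h.trans hzero.symm))
      have hle := (Matrix.toEuclideanCLM (𝕜 := ℂ) (B * (1 - D))).le_opNorm
        ((WithLp.equiv 2 (Fin N → ℂ)).symm x)
      rw [hTx] at hle
      rw [hopdef] at hlt
      nlinarith [mul_lt_mul_of_pos_right hlt hxn]
    · intro hP1
      haveI : Nontrivial (EuclideanSpace ℂ (Fin N)) := by
        refine ⟨EuclideanSpace.single ⟨0, hN⟩ (1:ℂ), 0, ?_⟩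
        intro h
        have := congrArg (fun z => z ⟨0, hN⟩) h
        simpa using this
      obtain ⟨x, hx1, hxT⟩ := myAttain (Matrix.toEuclideanCLM (𝕜 := ℂ) (B * (1 - D)))
      have hmul : Matrix.toEuclideanCLM (𝕜 := ℂ) (B * (1 - D)) x
          = Matrix.toEuclideanCLM (𝕜 := ℂ) B (Matrix.toEuclideanCLM (𝕜 := ℂ) (1 - D) x) := by
        rw [_root_.map_mul]; rfl
      have hB1 := myProj _ hTBadj hTBidem
      have hQ1 := myProj _ hTQadj hTQidem
      have hle : ‖Matrix.toEuclideanCLM (𝕜 := ℂ) (B * (1 - D)) x‖ ≤ 1 := by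
        rw [hmul]
        calc ‖Matrix.toEuclideanCLM (𝕜 := ℂ) B (Matrix.toEuclideanCLM (𝕜 := ℂ) (1 - D) x)‖
            ≤ ‖Matrix.toEuclideanCLM (𝕜 := ℂ) (1 - D) x‖ := (hB1 _).1
          _ ≤ ‖x‖ := (hQ1 x).1
          _ = 1 := hx1
      rcases lt_or_eq_of_le hle with h | h
      · rw [hopdef, ← hxT]; exact h
      · exfalso
        rw [hmul] at h
        have hQnorm : ‖Matrix.toEuclideanCLM (𝕜 := ℂ) (1 - D) x‖ = ‖x‖ := by
          have hge : (1:ℝ) ≤ ‖Matrix.toEuclideanCLM (𝕜 := ℂ) (1 - D) x‖ :=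
            h ▸ (hB1 (Matrix.toEuclideanCLM (𝕜 := ℂ) (1 - D) x)).1
          rw [hx1]
          exact le_antisymm (hx1 ▸ (hQ1 x).1) hge
        have hQeq : Matrix.toEuclideanCLM (𝕜 := ℂ) (1 - D) x = x := (hQ1 x).2 hQnorm
        have hBeq : Matrix.toEuclideanCLM (𝕜 := ℂ) B x = x := by
          apply (hB1 x).2
          calc ‖Matrix.toEuclideanCLM (𝕜 := ℂ) B x‖
              = ‖Matrix.toEuclideanCLM (𝕜 := ℂ) B
                  (Matrix.toEuclideanCLM (𝕜 := ℂ) (1 - D) x)‖ := by rw [hQeq]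
            _ = 1 := h
            _ = ‖x‖ := hx1.symm
        apply hP1
        set x0 : Fin N → ℂ := WithLp.equiv 2 (Fin N → ℂ) x with hx0def
        have hxx : x = (WithLp.equiv 2 (Fin N → ℂ)).symm x0 := (Equiv.symm_apply_apply _ _).symm
        have hBx : B *ᵥ x0 = x0 := by
          have h' := hBeq
          rw [hxx, hbr] at h'
          exact (WithLp.equiv 2 (Fin N → ℂ)).symm.injective h'
        have hQx : (1 - D) *ᵥ x0 = x0 := by
          have h' := hQeq
          rw [hxx, hbr] at h'
          exact (WithLp.equiv 2 (Fin N → ℂ)).symm.injective h'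
        have hDx : D *ᵥ x0 = 0 := by
          have h' := hQx
          rw [Matrix.sub_mulVec, Matrix.one_mulVec] at h'
          exact sub_eq_self.mp h'
        refine ⟨x0, ?_, hBx, hDx⟩
        intro h0
        rw [h0] at hxx
        rw [hxx, hzero] at hx1
        simp at hx1
  -- Claim II
  have claimII : (¬ ∃ x : Fin N → ℂ, x ≠ 0 ∧ B *ᵥ x = x ∧ D *ᵥ x = 0) ↔
      ∀ v : {j // j ∈ F} → ℂ, G *ᵥ v = 0 → v = 0 := by
    constructor
    · intro h v
      contrapose! h
      obtain ⟨hGv, hv⟩ := h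
      set y : Fin N → ℂ := fun j => if hj : j ∈ F then v ⟨j, hj⟩ else 0 with hy
      have hSy : Matrix.diagonal f *ᵥ y = y := by
        funext j
        rw [Matrix.mulVec_diagonal]
        by_cases hj : j ∈ F <;> simp [hf, hy, hj]
      refine ⟨U *ᵥ y, ?_, ?_, ?_⟩
      · intro h0
        have hy0 : y = 0 := by
          have h1 : Uᴴ *ᵥ (U *ᵥ y) = 0 := by rw [h0, Matrix.mulVec_zero]
          rwa [Matrix.mulVec_mulVec, hU2, Matrix.one_mulVec] at h1
        apply hv
        funext j
        have := congrFun hy0 (j : Fin N)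
        simpa [hy, j.2] using this
      · rw [hB, Matrix.mulVec_mulVec, Matrix.mul_assoc (U * Matrix.diagonal f) Uᴴ U,
          hU2, Matrix.mul_one, ← Matrix.mulVec_mulVec, hSy]
      · funext i
        rw [hD, Matrix.mulVec_diagonal]
        simp only [Pi.zero_apply]
        by_cases hiS : i ∈ S
        · simp only [hiS, if_true, one_mul]
          have hsum : (U *ᵥ y) i = (G *ᵥ v) ⟨i, hiS⟩ := by
            rw [hG]
            simp only [Matrix.mulVec, dotProduct, Matrix.submatrix_apply]
            calc ∑ j : Fin N, U i j * y j
                = ∑ j ∈ F, U i j * y j :=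
                  (Finset.sum_subset F.subset_univ (fun j _ hj => by simp [hy, hj])).symm
              _ = ∑ j : {j // j ∈ F}, U i (j : Fin N) * y (j : Fin N) :=
                  (Finset.sum_coe_sort F (fun j => U i j * y j)).symm
              _ = ∑ j : {j // j ∈ F}, U i (j : Fin N) * v j := by
                  apply Finset.sum_congr rfl
                  intro j _
                  rw [hy]
                  simp [j.2]
          rw [hsum, hGv]
          simp
        · simp [hiS]
    · rintro hinj ⟨x, hx0, hBx, hDx⟩
      set y := Uᴴ *ᵥ x with hy
      have hxy : U *ᵥ y = x := by
        rw [hy, Matrix.mulVec_mulVec, hU1, Matrix.one_mulVec]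
      have hSy : Matrix.diagonal f *ᵥ y = y := by
        have h1 : Uᴴ *ᵥ (B *ᵥ x) = Uᴴ *ᵥ x := by rw [hBx]
        rw [hB, Matrix.mulVec_mulVec,
          show Uᴴ * (U * Matrix.diagonal f * Uᴴ) = Matrix.diagonal f * Uᴴ by
            rw [← Matrix.mul_assoc, ← Matrix.mul_assoc, hU2, Matrix.one_mul],
          ← Matrix.mulVec_mulVec] at h1
        rw [hy]
        exact h1
      have hyF : ∀ j, j ∉ F → y j = 0 := by
        intro j hj
        have h1 := congrFun hSy j
        rw [Matrix.mulVec_diagonal f y j] at h1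
        simpa [hf, hj] using h1.symm
      set v : {j // j ∈ F} → ℂ := fun j => y (j : Fin N) with hv
      have hGv : G *ᵥ v = 0 := by
        funext i
        have hxi : x (i : Fin N) = 0 := by
          have h1 := congrFun hDx (i : Fin N)
          rw [hD, Matrix.mulVec_diagonal (fun i => if i ∈ S then (1:ℂ) else 0) x (i : Fin N)]
            at h1
          simpa [i.2] using h1
        simp only [Pi.zero_apply]
        calc (G *ᵥ v) i = ∑ j : {j // j ∈ F}, U (i : Fin N) (j : Fin N) * y (j : Fin N) := by
              rw [hG]
              simp only [Matrix.mulVec, dotProduct, Matrix.submatrix_apply, hv]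
          _ = ∑ j ∈ F, U (i : Fin N) j * y j :=
              Finset.sum_coe_sort F (fun j => U (i : Fin N) j * y j)
          _ = ∑ j : Fin N, U (i : Fin N) j * y j :=
              Finset.sum_subset F.subset_univ (fun j _ hj => by simp [hyF j hj])
          _ = (U *ᵥ y) (i : Fin N) := by
              simp only [Matrix.mulVec, dotProduct]
          _ = 0 := by rw [hxy, hxi]
      have hv0 : v ≠ 0 := by
        intro h
        apply hx0
        rw [← hxy]
        have hy0 : y = 0 := by
          funext j
          by_cases hj : j ∈ F
          · exact congrFun h ⟨j, hj⟩
          · exact hyF j hj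
        rw [hy0, Matrix.mulVec_zero]
      exact hv0 (hinj v hGv)
  -- Claim III
  have claimIII : (∀ v : {j // j ∈ F} → ℂ, G *ᵥ v = 0 → v = 0) ↔ G.rank = F.card := by
    have hrn := LinearMap.finrank_range_add_finrank_ker G.mulVecLin
    have hcard : Module.finrank ℂ ({j // j ∈ F} → ℂ) = F.card := by
      rw [Module.finrank_pi, Fintype.card_coe]
    rw [hcard] at hrn
    constructor
    · intro h
      have hker : LinearMap.ker G.mulVecLin = ⊥ := Matrix.ker_mulVecLin_eq_bot_iff.mpr h
      rw [hker, finrank_bot] at hrn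
      rw [Matrix.rank]
      omega
    · intro h v hGv
      have hker : LinearMap.ker G.mulVecLin = ⊥ := by
        rw [← Submodule.finrank_eq_zero]
        rw [Matrix.rank] at h
        omega
      exact Matrix.ker_mulVecLin_eq_bot_iff.mp hker v hGv
  rw [claimI, claimII, claimIII]
end
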